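/- Let α ∈ ℝ^{e×d} (e ≥ d ≥ 1) be a non-degenerate coefficient matrix and let O be the associated optimization map on constraint matrices. Then for every constraint matrix m = (m̲, m̄) ∈ ℝ^{e×2}, the open polytope P^α_m is nonempty if and only if O(m)̲_i < O(m)̄_i for all i ∈ {1, …, e}. -/

import Mathlib

open Set

/-- A constraint matrix: a pair of vectors of lower and upper bounds in `ℝ^e`. -/
abbrev CM (e : ℕ) := (Fin e → ℝ) × (Fin e → ℝ)

/-- The open polytope `P^α_m` associated with a coefficient matrix `α` and a
constraint matrix `m`. -/
def PolySet {e d : ℕ} (α : Matrix (Fin e) (Fin d) ℝ) (m : CM e) : Set (Fin d → ℝ) :=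
  {x | ∀ i, m.1 i < α.mulVec x i ∧ α.mulVec x i < m.2 i}

/-- A coefficient matrix is non-degenerate if its rows are nonzero and
pairwise non-proportional. -/
def Nondeg {e d : ℕ} (α : Matrix (Fin e) (Fin d) ℝ) : Prop :=
  (∀ i, α i ≠ 0) ∧ ∀ i j : Fin e, i ≠ j → ∀ c : ℝ, α i ≠ c • α j

/-- The set `Λ_i`: vectors `λ ∈ ℝ^e` supported on some `S` with `|S| ≤ d` which are
the unique solution of `λᵀ α = α_i` with support in `S`. -/
def Lambda {e d : ℕ} (α : Matrix (Fin e) (Fin d) ℝ) (i : Fin e) : Set (Fin e → ℝ) :=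
  {l | ∃ S : Finset (Fin e), S.card ≤ d ∧ (∀ k ∉ S, l k = 0) ∧
        (∀ j, ∑ k, l k * α k j = α i j) ∧
        ∀ l' : Fin e → ℝ, (∀ k ∉ S, l' k = 0) → (∀ j, ∑ k, l' k * α k j = α i j) → l' = l}

/-- `e̲_k(a,m)` -/
noncomputable def eLow {e : ℕ} (a : ℝ) (m : CM e) (k : Fin e) : ℝ :=
  if 0 ≤ a then m.1 k else m.2 k

/-- `ē_k(a,m)` -/
noncomputable def eHigh {e : ℕ} (a : ℝ) (m : CM e) (k : Fin e) : ℝ :=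
  if 0 ≤ a then m.2 k else m.1 k

/-- The optimized constraint matrix `O(m)`. -/
noncomputable def Opt {e d : ℕ} (α : Matrix (Fin e) (Fin d) ℝ) (m : CM e) : CM e :=
  (fun i => sSup ((fun l : Fin e → ℝ => ∑ k, l k * eLow (l k) m k) '' Lambda α i),
   fun i => sInf ((fun l : Fin e → ℝ => ∑ k, l k * eHigh (l k) m k) '' Lambda α i))

/-- Intersection constraint matrix `m ∩ m'`. -/
def interCM {e : ℕ} (m m' : CM e) : CM e :=
  (fun i => max (m.1 i) (m'.1 i), fun i => min (m.2 i) (m'.2 i))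

/-- Constraint-matrix inclusion `m ⊂ m'`. -/
def cmSub {e : ℕ} (m m' : CM e) : Prop := ∀ i, m'.1 i ≤ m.1 i ∧ m.2 i ≤ m'.2 i


section AuxStatement0

open Finset

variable {d e : ℕ}

private lemma eHigh_congr' {m : CM e} {k : Fin e} {a b : ℝ} (h : 0 < a * b) :
    eHigh b m k = eHigh a m k := by
  have hiff : (0 ≤ b) ↔ (0 ≤ a) := by
    constructor <;> intro h' <;> nlinarith
  simp only [eHigh, hiff]

private lemma mul_eLow_neg {m : CM e} {k : Fin e} {t a : ℝ} (ht : t < 0) :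
    (t * a) * eLow (t * a) m k = t * (a * eHigh a m k) := by
  rcases lt_trichotomy a 0 with h | h | h
  · have h1 : (0:ℝ) ≤ t * a := le_of_lt (mul_pos_of_neg_of_neg ht h)
    have h2 : ¬ ((0:ℝ) ≤ a) := not_le.2 h
    simp only [eLow, eHigh, if_pos h1, if_neg h2]; ring
  · simp [h]
  · have h1 : ¬ ((0:ℝ) ≤ t * a) := not_le.2 (mul_neg_of_neg_of_pos ht h)
    simp only [eLow, eHigh, if_neg h1, if_pos h.le]; ring

private lemma mul_eHigh_pos {m : CM e} {k : Fin e} {t a : ℝ} (ht : 0 < t) :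
    (t * a) * eHigh (t * a) m k = t * (a * eHigh a m k) := by
  rcases lt_trichotomy a 0 with h | h | h
  · have h1 : ¬ ((0:ℝ) ≤ t * a) := not_le.2 (mul_neg_of_pos_of_neg ht h)
    have h2 : ¬ ((0:ℝ) ≤ a) := not_le.2 h
    simp only [eHigh, if_neg h1, if_neg h2]; ring
  · simp [h]
  · have h1 : (0:ℝ) ≤ t * a := le_of_lt (mul_pos ht h)
    simp only [eHigh, if_pos h1, if_pos h.le]; ring

private lemma lambda_finite (α : Matrix (Fin e) (Fin d) ℝ) (i : Fin e) :
    (Lambda α i).Finite := by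
  have hsub : Lambda α i ⊆ ⋃ S : Finset (Fin e),
      {l : Fin e → ℝ | (∀ k ∉ S, l k = 0) ∧ (∀ j, ∑ k, l k * α k j = α i j) ∧
        ∀ l' : Fin e → ℝ, (∀ k ∉ S, l' k = 0) → (∀ j, ∑ k, l' k * α k j = α i j) → l' = l} := by
    rintro l ⟨S, _, h1, h2, h3⟩
    exact Set.mem_iUnion.2 ⟨S, h1, h2, h3⟩
  refine Set.Finite.subset (Set.finite_iUnion fun S => ?_) hsub
  apply Set.Subsingleton.finite
  rintro l₁ ⟨h1, h2, _⟩ l₂ ⟨_, _, h3⟩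
  exact h3 l₁ h1 h2

private lemma single_mem_lambda (hd : 1 ≤ d) (α : Matrix (Fin e) (Fin d) ℝ) (i : Fin e)
    (hαi : α i ≠ 0) : Pi.single i 1 ∈ Lambda α i := by
  refine ⟨{i}, by simpa using hd, ?_, ?_, ?_⟩
  · intro k hk
    exact Pi.single_eq_of_ne (by simpa using hk) 1
  · intro j
    rw [Finset.sum_eq_single i]
    · simp
    · intro k _ hk; simp [Pi.single_eq_of_ne hk]
    · simp
  · intro l' h0 hs
    have h2 : ∀ j, l' i * α i j = α i j := by
      intro j
      have hss : ∑ k, l' k * α k j = l' i * α i j := by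
        rw [Finset.sum_eq_single i]
        · intro k _ hk; rw [h0 k (by simpa using hk)]; ring
        · simp
      rw [← hss, hs j]
    have hi : l' i = 1 := by
      by_contra hne
      apply hαi
      funext j
      have h3 : (l' i - 1) * α i j = 0 := by linarith [h2 j]
      rcases mul_eq_zero.1 h3 with h4 | h4
      · exact absurd (by linarith : l' i = 1) hne
      · exact h4
    funext k
    by_cases hk : k = i
    · subst hk; simp [hi]
    · rw [h0 k (by simpa using hk), Pi.single_eq_of_ne hk]

private lemma sum_mul_mulVec {α : Matrix (Fin e) (Fin d) ℝ} {l : Fin e → ℝ} {v : Fin d → ℝ}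
    {g : Fin d → ℝ} (h : ∀ j, ∑ k, l k * α k j = g j) :
    ∑ k, l k * α.mulVec v k = ∑ j, g j * v j := by
  have hterm : ∀ j, ∑ k, l k * (α k j * v j) = g j * v j := by
    intro j; rw [← h j, Finset.sum_mul]
    exact Finset.sum_congr rfl fun k _ => by ring
  calc ∑ k, l k * α.mulVec v k = ∑ k, ∑ j, l k * (α k j * v j) := by
        apply Finset.sum_congr rfl; intro k _
        simp [Matrix.mulVec, dotProduct, Finset.mul_sum]
    _ = ∑ j, ∑ k, l k * (α k j * v j) := Finset.sum_comm
    _ = ∑ j, g j * v j := Finset.sum_congr rfl fun j _ => hterm j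

end AuxStatement0

section AuxStatement0b

open Finset

variable {d e : ℕ}

/-- A Farkas-type certificate of infeasibility. -/
private def IsCert (α : Matrix (Fin e) (Fin d) ℝ) (m : CM e) (w : Fin e → ℝ) : Prop :=
  (∃ k, w k ≠ 0) ∧ (∀ j, ∑ k, w k * α k j = 0) ∧ ∑ k, w k * eHigh (w k) m k ≤ 0

private lemma exists_cert (α : Matrix (Fin e) (Fin d) ℝ) (m : CM e)
    (hm : ∀ k, m.1 k < m.2 k) (hP : PolySet α m = ∅) : ∃ w, IsCert α m w := by
  set Q : Set (Fin e → ℝ) := Set.pi Set.univ fun k => Set.Ioo (m.1 k) (m.2 k) with hQdef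
  have hQconv : Convex ℝ Q := convex_pi fun k _ => convex_Ioo _ _
  have hQopen : IsOpen Q := isOpen_set_pi Set.finite_univ fun k _ => isOpen_Ioo
  have hVconv : Convex ℝ (Set.range α.mulVec) := by
    rintro _ ⟨x₁, rfl⟩ _ ⟨x₂, rfl⟩ a b _ _ _
    exact ⟨a • x₁ + b • x₂, by rw [Matrix.mulVec_add, Matrix.mulVec_smul, Matrix.mulVec_smul]⟩
  have hdisj : Disjoint Q (Set.range α.mulVec) := by
    rw [Set.disjoint_right]
    rintro _ ⟨x, rfl⟩ hy
    have hx : x ∈ PolySet α m := fun k => (hy k (Set.mem_univ k) : _)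
    rw [hP] at hx
    exact hx
  obtain ⟨f, u, hfQ, hfV⟩ := geometric_hahn_banach_open hQconv hQopen hVconv hdisj
  have hu0 : u ≤ 0 := by
    have := hfV 0 ⟨0, Matrix.mulVec_zero α⟩
    simpa using this
  have hfV0 : ∀ x, f (α.mulVec x) = 0 := by
    intro x
    by_contra hne
    have hmem : ((u - 1) / f (α.mulVec x)) • α.mulVec x ∈ Set.range α.mulVec :=
      ⟨((u - 1) / f (α.mulVec x)) • x, Matrix.mulVec_smul α _ x⟩
    have h2 := hfV _ hmem
    rw [map_smul, smul_eq_mul, div_mul_cancel₀ _ hne] at h2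
    linarith
  set w : Fin e → ℝ := fun k => f (Pi.single k 1) with hw
  have hfsum : ∀ y, f y = ∑ k, y k * w k := by
    intro y
    have hpi := LinearMap.pi_apply_eq_sum_univ (f : (Fin e → ℝ) →ₗ[ℝ] ℝ) y
    simp only [ContinuousLinearMap.coe_coe] at hpi
    rw [hpi]
    apply Finset.sum_congr rfl
    intro k _
    rw [smul_eq_mul]
    congr 2
    funext j
    by_cases hj : k = j
    · subst hj; simp
    · simp [hj, Pi.single_eq_of_ne (Ne.symm hj)]
  have hker : ∀ j, ∑ k, w k * α k j = 0 := by
    intro j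
    have h0 := hfV0 (Pi.single j 1)
    rw [hfsum, Matrix.mulVec_single] at h0
    rw [← h0]
    exact Finset.sum_congr rfl fun k _ => by simp; ring
  set z : Fin e → ℝ := fun k => (m.1 k + m.2 k) / 2 with hz
  have hzQ : z ∈ Q := by
    intro k _
    constructor
    · show m.1 k < (m.1 k + m.2 k) / 2; linarith [hm k]
    · show (m.1 k + m.2 k) / 2 < m.2 k; linarith [hm k]
  set yb : Fin e → ℝ := fun k => eHigh (w k) m k with hyb
  have hybIcc : ∀ k, m.1 k ≤ yb k ∧ yb k ≤ m.2 k := by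
    intro k
    show m.1 k ≤ eHigh (w k) m k ∧ eHigh (w k) m k ≤ m.2 k
    unfold eHigh
    split <;> constructor <;> linarith [(hm k).le]
  have hmix : ∀ θ : ℝ, 0 < θ → θ ≤ 1 → θ • z + (1 - θ) • yb ∈ Q := by
    intro θ hθ hθ1 k _
    have h1 := (hybIcc k).1
    have h2 := (hybIcc k).2
    have hzk1 : m.1 k < z k := by show m.1 k < (m.1 k + m.2 k)/2; linarith [hm k]
    have hzk2 : z k < m.2 k := by show (m.1 k + m.2 k)/2 < m.2 k; linarith [hm k]
    constructor
    · show m.1 k < θ * z k + (1 - θ) * yb k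
      nlinarith
    · show θ * z k + (1 - θ) * yb k < m.2 k
      nlinarith
  have hfz0 : f z < 0 := lt_of_lt_of_le (hfQ z hzQ) hu0
  have hfyb : f yb ≤ 0 := by
    by_contra hpos
    push_neg at hpos
    set B := |f yb - f z| with hB
    have hB0 : (0:ℝ) ≤ B := abs_nonneg _
    set θ := min 1 (f yb / (B + 1)) with hθdef
    have hθpos : 0 < θ := lt_min one_pos (div_pos hpos (by linarith))
    have hθ1 : θ ≤ 1 := min_le_left _ _
    have hθ2 : θ ≤ f yb / (B + 1) := min_le_right _ _
    have hmem := hmix θ hθpos hθ1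
    have hlt := lt_of_lt_of_le (hfQ _ hmem) hu0
    rw [map_add, map_smul, map_smul, smul_eq_mul, smul_eq_mul] at hlt
    -- hlt : θ * f z + (1 - θ) * f yb < 0
    have key : f yb < θ * (f yb - f z) := by nlinarith
    have h3 : θ * (f yb - f z) ≤ θ * B := mul_le_mul_of_nonneg_left (le_abs_self _) hθpos.le
    have h4 : θ * B ≤ (f yb / (B + 1)) * B := mul_le_mul_of_nonneg_right hθ2 hB0
    have h5 : (f yb / (B + 1)) * B < f yb := by
      rw [div_mul_eq_mul_div, div_lt_iff₀ (by linarith : (0:ℝ) < B + 1)]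
      nlinarith
    linarith
  have hwne : ∃ k, w k ≠ 0 := by
    by_contra hall
    push_neg at hall
    have : f z = 0 := by
      rw [hfsum]
      apply Finset.sum_eq_zero
      intro k _
      rw [hall k, mul_zero]
    linarith
  refine ⟨w, hwne, hker, ?_⟩
  have : ∑ k, w k * eHigh (w k) m k = f yb := by
    rw [hfsum]
    exact Finset.sum_congr rfl fun k _ => by show w k * eHigh (w k) m k = eHigh (w k) m k * w k; ring
  rw [this]
  exact hfyb

end AuxStatement0b

section AuxStatement0c

open Finset

variable {d e : ℕ}

private lemma descent_aux {α : Matrix (Fin e) (Fin d) ℝ} {m : CM e} {w : Fin e → ℝ}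
    (hw : IsCert α m w) {i : Fin e} (hi : w i ≠ 0) (c : Fin e → ℝ)
    (hc0 : ∃ k, c k ≠ 0) (hci : c i = 0) (hcsupp : ∀ k, w k = 0 → c k = 0)
    (hcker : ∀ j, ∑ k, c k * α k j = 0)
    (hL : ∑ k, c k * eHigh (w k) m k ≤ 0) :
    ∃ w', IsCert α m w' ∧
      (Finset.univ.filter fun k => w' k ≠ 0) ⊂ (Finset.univ.filter fun k => w k ≠ 0) := by
  by_cases hneg : ∃ k, w k * c k < 0
  · -- move along c until a coordinate vanishes
    set R : Finset (Fin e) := Finset.univ.filter fun k => w k * c k < 0 with hR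
    have hRne : R.Nonempty := by
      obtain ⟨k, hk⟩ := hneg
      exact ⟨k, by simp [hR, hk]⟩
    have hmemR : ∀ k ∈ R, w k * c k < 0 := by
      intro k hk; simpa [hR] using hk
    have hckR : ∀ k ∈ R, c k ≠ 0 := by
      intro k hk hc
      have := hmemR k hk
      rw [hc, mul_zero] at this
      exact lt_irrefl _ this
    have hratio : ∀ k ∈ R, 0 < -(w k) / c k := by
      intro k hk
      have h1 := hmemR k hk
      have h2 := hckR k hk
      have heq : -(w k) / c k = -(w k * c k) / (c k ^ 2) := by
        field_simp
      rw [heq]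
      apply div_pos (by linarith) (by positivity)
    set t := R.inf' hRne (fun k => -(w k) / c k) with ht
    have htpos : 0 < t := by
      rw [ht, Finset.lt_inf'_iff]
      exact hratio
    have htle : ∀ k ∈ R, t ≤ -(w k) / c k := fun k hk => Finset.inf'_le _ hk
    obtain ⟨k₀, hk₀R, hk₀⟩ := Finset.exists_mem_eq_inf' hRne (fun k => -(w k) / c k)
    set w' : Fin e → ℝ := fun k => w k + t * c k with hw'
    have hw'k₀ : w' k₀ = 0 := by
      have hck₀ := hckR k₀ hk₀R
      show w k₀ + t * c k₀ = 0
      rw [ht, hk₀]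
      field_simp
      ring
    have hsupp : ∀ k, w k = 0 → w' k = 0 := by
      intro k hk
      show w k + t * c k = 0
      rw [hk, hcsupp k hk]; ring
    have hsign : ∀ k, 0 ≤ w k * w' k := by
      intro k
      by_cases hck : c k = 0
      · show 0 ≤ w k * (w k + t * c k)
        rw [hck]; nlinarith [sq_nonneg (w k)]
      · have hwk : w k ≠ 0 := fun h => hck (hcsupp k h)
        rcases lt_trichotomy (w k * c k) 0 with h | h | h
        · have hkR : k ∈ R := by simp [hR, h]
          have h1 := htle k hkR
          have h2 : t * (w k * c k) ≥ (-(w k) / c k) * (w k * c k) := by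
            apply mul_le_mul_of_nonpos_right h1 h.le
          have h3 : (-(w k) / c k) * (w k * c k) = -(w k ^ 2) := by
            field_simp
          show 0 ≤ w k * (w k + t * c k)
          nlinarith
        · exact absurd h (mul_ne_zero hwk hck)
        · show 0 ≤ w k * (w k + t * c k)
          nlinarith [sq_nonneg (w k), mul_pos htpos h]
    have hstab : ∀ k, w' k * eHigh (w' k) m k = w' k * eHigh (w k) m k := by
      intro k
      by_cases h0 : w' k = 0
      · rw [h0, zero_mul, zero_mul]
      · have hwk : w k ≠ 0 := by
          intro h
          exact h0 (hsupp k h)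
        have hprod : 0 < w k * w' k := lt_of_le_of_ne (hsign k) (Ne.symm (mul_ne_zero hwk h0))
        rw [eHigh_congr' hprod]
    refine ⟨w', ⟨⟨i, ?_⟩, ?_, ?_⟩, ?_⟩
    · show w i + t * c i ≠ 0
      rw [hci, mul_zero, add_zero]; exact hi
    · intro j
      have h1 := hw.2.1 j
      have h2 := hcker j
      show ∑ k, (w k + t * c k) * α k j = 0
      have : ∑ k, (w k + t * c k) * α k j = ∑ k, w k * α k j + t * ∑ k, c k * α k j := by
        rw [Finset.mul_sum, ← Finset.sum_add_distrib]
        exact Finset.sum_congr rfl fun k _ => by ring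
      rw [this, h1, h2]; ring
    · have hF := hw.2.2
      calc ∑ k, w' k * eHigh (w' k) m k = ∑ k, w' k * eHigh (w k) m k :=
            Finset.sum_congr rfl fun k _ => hstab k
        _ = ∑ k, w k * eHigh (w k) m k + t * ∑ k, c k * eHigh (w k) m k := by
            rw [Finset.mul_sum, ← Finset.sum_add_distrib]
            exact Finset.sum_congr rfl fun k _ => by show (w k + t * c k) * _ = _; ring
        _ ≤ 0 := by nlinarith
    · rw [Finset.ssubset_iff_of_subset]
      · refine ⟨k₀, ?_, ?_⟩
        · simp only [Finset.mem_filter, Finset.mem_univ, true_and]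
          intro h
          have := hmemR k₀ hk₀R
          rw [h, zero_mul] at this
          exact lt_irrefl _ this
        · simp [hw'k₀]
      · intro k hk
        simp only [Finset.mem_filter, Finset.mem_univ, true_and] at hk ⊢
        intro h
        exact hk (hsupp k h)
  · -- c itself is a certificate
    push_neg at hneg
    refine ⟨c, ⟨hc0, hcker, ?_⟩, ?_⟩
    · have : ∑ k, c k * eHigh (c k) m k = ∑ k, c k * eHigh (w k) m k := by
        apply Finset.sum_congr rfl
        intro k _
        by_cases hck : c k = 0
        · rw [hck, zero_mul, zero_mul]
        · have hwk : w k ≠ 0 := fun h => hck (hcsupp k h)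
          have hprod : 0 < w k * c k := lt_of_le_of_ne (hneg k) (Ne.symm (mul_ne_zero hwk hck))
          rw [eHigh_congr' hprod]
      rw [this]; exact hL
    · rw [Finset.ssubset_iff_of_subset]
      · exact ⟨i, by simp [hi], by simp [hci]⟩
      · intro k hk
        simp only [Finset.mem_filter, Finset.mem_univ, true_and] at hk ⊢
        intro h
        exact hk (hcsupp k h)

private lemma descent {α : Matrix (Fin e) (Fin d) ℝ} {m : CM e} {w : Fin e → ℝ}
    (hw : IsCert α m w) {i : Fin e} (hi : w i ≠ 0) (c : Fin e → ℝ)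
    (hc0 : ∃ k, c k ≠ 0) (hci : c i = 0) (hcsupp : ∀ k, w k = 0 → c k = 0)
    (hcker : ∀ j, ∑ k, c k * α k j = 0) :
    ∃ w', IsCert α m w' ∧
      (Finset.univ.filter fun k => w' k ≠ 0) ⊂ (Finset.univ.filter fun k => w k ≠ 0) := by
  rcases le_or_gt (∑ k, c k * eHigh (w k) m k) 0 with hL | hL
  · exact descent_aux hw hi c hc0 hci hcsupp hcker hL
  · refine descent_aux hw hi (-c) ?_ ?_ ?_ ?_ ?_
    · obtain ⟨k, hk⟩ := hc0
      exact ⟨k, by simpa using hk⟩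
    · simp [hci]
    · intro k hk; simp [hcsupp k hk]
    · intro j
      have := hcker j
      have h2 : ∑ k, (-c) k * α k j = -∑ k, c k * α k j := by
        rw [← Finset.sum_neg_distrib]
        exact Finset.sum_congr rfl fun k _ => by simp
      rw [h2, this, neg_zero]
    · have h2 : ∑ k, (-c) k * eHigh (w k) m k = -∑ k, c k * eHigh (w k) m k := by
        rw [← Finset.sum_neg_distrib]
        exact Finset.sum_congr rfl fun k _ => by simp
      rw [h2]
      linarith

end AuxStatement0c

section AuxStatement0d

open Finset

variable {d e : ℕ}

private lemma card_le_of_indep {α : Matrix (Fin e) (Fin d) ℝ} {S : Finset (Fin e)}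
    (hindep : ∀ c : Fin e → ℝ, (∀ k ∉ S, c k = 0) → (∀ j, ∑ k, c k * α k j = 0) → c = 0) :
    S.card ≤ d := by
  have hLI : LinearIndependent ℝ (fun k : {x // x ∈ S} => α k.1) := by
    rw [Fintype.linearIndependent_iff]
    intro g hg
    set c : Fin e → ℝ := fun k => if h : k ∈ S then g ⟨k, h⟩ else 0 with hc
    have hker : ∀ j, ∑ k, c k * α k j = 0 := by
      intro j
      have h1 : ∑ k, c k * α k j = ∑ k ∈ S, c k * α k j := by
        symm
        apply Finset.sum_subset (Finset.subset_univ S)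
        intro k _ hk
        simp [hc, dif_neg hk]
      have h2 : ∑ k ∈ S, c k * α k j = ∑ k ∈ S.attach, g k * α k.1 j := by
        rw [← Finset.sum_attach S (fun k => c k * α k j)]
        apply Finset.sum_congr rfl
        intro k _
        simp [hc, k.2]
      have h3 : ∑ k ∈ S.attach, g k * α k.1 j = 0 := by
        have := congrFun hg j
        simpa [Finset.sum_apply] using this
      rw [h1, h2, h3]
    have hc0 := hindep c (fun k hk => dif_neg hk) hker
    intro k
    have : c k.1 = 0 := by rw [hc0]; rfl
    simpa [hc, k.2] using this
  have h1 := hLI.fintype_card_le_finrank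
  simpa [Module.finrank_fin_fun, Fintype.card_coe] using h1

end AuxStatement0d

section AuxStatement0e

open Finset

variable {d e : ℕ}

private lemma bounds_of_mem {α : Matrix (Fin e) (Fin d) ℝ} {m : CM e} {x : Fin d → ℝ}
    (hx : x ∈ PolySet α m) {i : Fin e} (hαi : α i ≠ 0) {l : Fin e → ℝ}
    (hl : l ∈ Lambda α i) :
    ∑ k, l k * eLow (l k) m k < α.mulVec x i ∧
      α.mulVec x i < ∑ k, l k * eHigh (l k) m k := by
  obtain ⟨S, _, h0, hsum, _⟩ := hl
  have hkey : ∑ k, l k * α.mulVec x k = α.mulVec x i := by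
    rw [sum_mul_mulVec hsum]
    simp [Matrix.mulVec, dotProduct]
  have hlne : ∃ k, l k ≠ 0 := by
    by_contra hall
    push_neg at hall
    apply hαi
    funext j
    rw [← hsum j]
    apply Finset.sum_eq_zero
    intro k _
    rw [hall k, zero_mul]
  obtain ⟨k₁, hk₁⟩ := hlne
  constructor
  · rw [← hkey]
    apply Finset.sum_lt_sum
    · intro k _
      rcases lt_trichotomy (l k) 0 with h | h | h
      · have : eLow (l k) m k = m.2 k := by rw [eLow, if_neg (not_le.2 h)]
        rw [this]
        exact mul_le_mul_of_nonpos_left (hx k).2.le h.le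
      · rw [h, zero_mul, zero_mul]
      · have : eLow (l k) m k = m.1 k := by rw [eLow, if_pos h.le]
        rw [this]
        exact mul_le_mul_of_nonneg_left (hx k).1.le h.le
    · refine ⟨k₁, Finset.mem_univ k₁, ?_⟩
      rcases lt_trichotomy (l k₁) 0 with h | h | h
      · have : eLow (l k₁) m k₁ = m.2 k₁ := by rw [eLow, if_neg (not_le.2 h)]
        rw [this]
        exact mul_lt_mul_of_neg_left (hx k₁).2 h
      · exact absurd h hk₁
      · have : eLow (l k₁) m k₁ = m.1 k₁ := by rw [eLow, if_pos h.le]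
        rw [this]
        exact mul_lt_mul_of_pos_left (hx k₁).1 h
  · rw [← hkey]
    apply Finset.sum_lt_sum
    · intro k _
      rcases lt_trichotomy (l k) 0 with h | h | h
      · have : eHigh (l k) m k = m.1 k := by rw [eHigh, if_neg (not_le.2 h)]
        rw [this]
        exact mul_le_mul_of_nonpos_left (hx k).1.le h.le
      · rw [h, zero_mul, zero_mul]
      · have : eHigh (l k) m k = m.2 k := by rw [eHigh, if_pos h.le]
        rw [this]
        exact mul_le_mul_of_nonneg_left (hx k).2.le h.le
    · refine ⟨k₁, Finset.mem_univ k₁, ?_⟩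
      rcases lt_trichotomy (l k₁) 0 with h | h | h
      · have : eHigh (l k₁) m k₁ = m.1 k₁ := by rw [eHigh, if_neg (not_le.2 h)]
        rw [this]
        exact mul_lt_mul_of_neg_left (hx k₁).1 h
      · exact absurd h hk₁
      · have : eHigh (l k₁) m k₁ = m.2 k₁ := by rw [eHigh, if_pos h.le]
        rw [this]
        exact mul_lt_mul_of_pos_left (hx k₁).2 h

private lemma single_lowVal (m : CM e) (i : Fin e) :
    ∑ k, (Pi.single i 1 : Fin e → ℝ) k * eLow ((Pi.single i 1 : Fin e → ℝ) k) m k = m.1 i := by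
  rw [Finset.sum_eq_single i]
  · simp [eLow]
  · intro k _ hk
    rw [Pi.single_eq_of_ne hk, zero_mul]
  · simp

private lemma single_highVal (m : CM e) (i : Fin e) :
    ∑ k, (Pi.single i 1 : Fin e → ℝ) k * eHigh ((Pi.single i 1 : Fin e → ℝ) k) m k = m.2 i := by
  rw [Finset.sum_eq_single i]
  · simp [eHigh]
  · intro k _ hk
    rw [Pi.single_eq_of_ne hk, zero_mul]
  · simp

end AuxStatement0e

/-- `P^α_m` is nonempty iff all optimized lower bounds are strictly below
the corresponding optimized upper bounds. -/
theorem statement_0 {d e : ℕ} (hd : 1 ≤ d) (hde : d ≤ e)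
    (α : Matrix (Fin e) (Fin d) ℝ) (hα : Nondeg α) (m : CM e) :
    (PolySet α m).Nonempty ↔ ∀ i : Fin e, (Opt α m).1 i < (Opt α m).2 i := by
  have hδ : ∀ i : Fin e, Pi.single i 1 ∈ Lambda α i :=
    fun i => single_mem_lambda hd α i (hα.1 i)
  have hO1 : ∀ i, (Opt α m).1 i
      = sSup ((fun l : Fin e → ℝ => ∑ k, l k * eLow (l k) m k) '' Lambda α i) := fun i => rfl
  have hO2 : ∀ i, (Opt α m).2 i
      = sInf ((fun l : Fin e → ℝ => ∑ k, l k * eHigh (l k) m k) '' Lambda α i) := fun i => rfl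
  constructor
  · rintro ⟨x, hx⟩ i
    have hfin := lambda_finite α i
    have hne : (Lambda α i).Nonempty := ⟨_, hδ i⟩
    obtain ⟨l₁, hl₁, hv₁⟩ := Set.Nonempty.csSup_mem
      (hne.image (fun l : Fin e → ℝ => ∑ k, l k * eLow (l k) m k))
      (hfin.image (fun l : Fin e → ℝ => ∑ k, l k * eLow (l k) m k))
    obtain ⟨l₂, hl₂, hv₂⟩ := Set.Nonempty.csInf_mem
      (hne.image (fun l : Fin e → ℝ => ∑ k, l k * eHigh (l k) m k))
      (hfin.image (fun l : Fin e → ℝ => ∑ k, l k * eHigh (l k) m k))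
    rw [hO1 i, hO2 i, ← hv₁, ← hv₂]
    exact lt_trans (bounds_of_mem hx (hα.1 i) hl₁).1 (bounds_of_mem hx (hα.1 i) hl₂).2
  · intro h
    by_contra hemp
    rw [Set.not_nonempty_iff_eq_empty] at hemp
    have hbddA : ∀ i, BddAbove ((fun l : Fin e → ℝ => ∑ k, l k * eLow (l k) m k) '' Lambda α i) :=
      fun i => ((lambda_finite α i).image _).bddAbove
    have hbddB : ∀ i, BddBelow ((fun l : Fin e → ℝ => ∑ k, l k * eHigh (l k) m k) '' Lambda α i) :=
      fun i => ((lambda_finite α i).image _).bddBelow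
    have hlow : ∀ i, m.1 i ≤ (Opt α m).1 i := by
      intro i
      rw [hO1 i]
      exact le_csSup (hbddA i) ⟨_, hδ i, single_lowVal m i⟩
    have hhigh : ∀ i, (Opt α m).2 i ≤ m.2 i := by
      intro i
      rw [hO2 i]
      exact csInf_le (hbddB i) ⟨_, hδ i, single_highVal m i⟩
    have hm : ∀ k, m.1 k < m.2 k :=
      fun k => lt_of_le_of_lt (hlow k) (lt_of_lt_of_le (h k) (hhigh k))
    obtain ⟨w₀, hw₀⟩ := exists_cert α m hm hemp
    set nset : Set ℕ :=
      {n | ∃ w, IsCert α m w ∧ (Finset.univ.filter fun k => w k ≠ 0).card = n} with hnset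
    have hnne : nset.Nonempty := ⟨_, w₀, hw₀, rfl⟩
    obtain ⟨w, hw, hwcard⟩ := Nat.sInf_mem hnne
    obtain ⟨i, hi⟩ := hw.1
    set S : Finset (Fin e) := (Finset.univ.filter fun k => w k ≠ 0).erase i with hS
    have hindep : ∀ c : Fin e → ℝ, (∀ k ∉ S, c k = 0) → (∀ j, ∑ k, c k * α k j = 0) → c = 0 := by
      intro c hcS hcker
      by_contra hc
      have hc0 : ∃ k, c k ≠ 0 := Function.ne_iff.1 hc
      have hci : c i = 0 := hcS i (Finset.notMem_erase i _)
      have hcsupp : ∀ k, w k = 0 → c k = 0 := by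
        intro k hk
        apply hcS
        rw [hS]
        intro hmem
        have h2 := Finset.mem_of_mem_erase hmem
        simp only [Finset.mem_filter, Finset.mem_univ, true_and] at h2
        exact h2 hk
      obtain ⟨w', hw', hss⟩ := descent hw hi c hc0 hci hcsupp hcker
      have hmem : (Finset.univ.filter fun k => w' k ≠ 0).card ∈ nset := ⟨w', hw', rfl⟩
      have h1 := Nat.sInf_le hmem
      have h2 := Finset.card_lt_card hss
      omega
    have hcard : S.card ≤ d := card_le_of_indep hindep
    set t : ℝ := -(w i)⁻¹ with htdef
    set l : Fin e → ℝ := fun k => if k = i then 0 else t * w k with hldef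
    have hli : l i = 0 := by simp [hldef]
    have hlk : ∀ k, k ≠ i → l k = t * w k := by
      intro k hk; simp [hldef, hk]
    have hlS : ∀ k ∉ S, l k = 0 := by
      intro k hk
      by_cases hki : k = i
      · rw [hki]; exact hli
      · have hwk : w k = 0 := by
          by_contra hwk
          exact hk (Finset.mem_erase.2 ⟨hki, by simp [hwk]⟩)
        rw [hlk k hki, hwk, mul_zero]
    have hlsum : ∀ j, ∑ k, l k * α k j = α i j := by
      intro j
      have h0 := hw.2.1 j
      have hsplit : w i * α i j + ∑ k ∈ Finset.univ.erase i, w k * α k j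
          = ∑ k, w k * α k j :=
        Finset.add_sum_erase Finset.univ (fun k => w k * α k j) (Finset.mem_univ i)
      have hsplit2 : l i * α i j + ∑ k ∈ Finset.univ.erase i, l k * α k j
          = ∑ k, l k * α k j :=
        Finset.add_sum_erase Finset.univ (fun k => l k * α k j) (Finset.mem_univ i)
      have hrw : ∑ k ∈ Finset.univ.erase i, l k * α k j
          = t * ∑ k ∈ Finset.univ.erase i, w k * α k j := by
        rw [Finset.mul_sum]
        apply Finset.sum_congr rfl
        intro k hk
        rw [hlk k (Finset.ne_of_mem_erase hk)]; ring
      have herase : ∑ k ∈ Finset.univ.erase i, w k * α k j = -(w i * α i j) := by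
        linarith [hsplit, h0]
      rw [← hsplit2, hli, zero_mul, zero_add, hrw, herase, htdef]
      field_simp
    have hlmem : l ∈ Lambda α i := by
      refine ⟨S, hcard, hlS, hlsum, ?_⟩
      intro l' hl'S hl'sum
      have hdiff := hindep (fun k => l' k - l k)
        (fun k hk => by show l' k - l k = 0; rw [hl'S k hk, hlS k hk, sub_zero]) ?_
      · funext k
        have h2 := congrFun hdiff k
        simp only [Pi.zero_apply, sub_eq_zero] at h2
        exact h2
      · intro j
        have h2 : ∑ k, (l' k - l k) * α k j = (∑ k, l' k * α k j) - ∑ k, l k * α k j := by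
          rw [← Finset.sum_sub_distrib]
          exact Finset.sum_congr rfl fun k _ => by ring
        rw [h2, hl'sum j, hlsum j, sub_self]
    have hF := hw.2.2
    have hOpt2le : (Opt α m).2 i ≤ ∑ k, l k * eHigh (l k) m k := by
      rw [hO2 i]; exact csInf_le (hbddB i) ⟨l, hlmem, rfl⟩
    have hOpt1ge : ∑ k, l k * eLow (l k) m k ≤ (Opt α m).1 i := by
      rw [hO1 i]; exact le_csSup (hbddA i) ⟨l, hlmem, rfl⟩
    have hsplitF : w i * eHigh (w i) m i + ∑ k ∈ Finset.univ.erase i, w k * eHigh (w k) m k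
        = ∑ k, w k * eHigh (w k) m k :=
      Finset.add_sum_erase Finset.univ (fun k => w k * eHigh (w k) m k) (Finset.mem_univ i)
    have he2 : ∑ k ∈ Finset.univ.erase i, w k * eHigh (w k) m k
        ≤ -(w i * eHigh (w i) m i) := by linarith [hsplitF, hF]
    rcases lt_or_gt_of_ne hi with hneg | hpos
    · -- w i < 0, t > 0
      have htpos : 0 < t := by
        have h2 : (w i)⁻¹ < 0 := inv_lt_zero.2 hneg
        rw [htdef]; linarith
      have hhi : eHigh (w i) m i = m.1 i := by rw [eHigh, if_neg (not_le.2 hneg)]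
      have e1 : ∑ k, l k * eHigh (l k) m k
          = t * ∑ k ∈ Finset.univ.erase i, w k * eHigh (w k) m k := by
        rw [← Finset.add_sum_erase _ (fun k => l k * eHigh (l k) m k) (Finset.mem_univ i),
          hli, zero_mul, zero_add, Finset.mul_sum]
        apply Finset.sum_congr rfl
        intro k hk
        rw [hlk k (Finset.ne_of_mem_erase hk)]
        exact mul_eHigh_pos htpos
      have hcalc : ∑ k, l k * eHigh (l k) m k ≤ m.1 i := by
        rw [e1]
        calc t * ∑ k ∈ Finset.univ.erase i, w k * eHigh (w k) m k
            ≤ t * (-(w i * eHigh (w i) m i)) := mul_le_mul_of_nonneg_left he2 htpos.le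
          _ = m.1 i := by rw [hhi, htdef]; field_simp
      linarith [h i, hOpt2le, hcalc, hlow i]
    · -- w i > 0, t < 0
      have htneg : t < 0 := by
        have h2 : 0 < (w i)⁻¹ := inv_pos.2 hpos
        rw [htdef]; linarith
      have hhi : eHigh (w i) m i = m.2 i := by rw [eHigh, if_pos hpos.le]
      have e1 : ∑ k, l k * eLow (l k) m k
          = t * ∑ k ∈ Finset.univ.erase i, w k * eHigh (w k) m k := by
        rw [← Finset.add_sum_erase _ (fun k => l k * eLow (l k) m k) (Finset.mem_univ i),
          hli, zero_mul, zero_add, Finset.mul_sum]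
        apply Finset.sum_congr rfl
        intro k hk
        rw [hlk k (Finset.ne_of_mem_erase hk)]
        exact mul_eLow_neg htneg
      have hcalc : m.2 i ≤ ∑ k, l k * eLow (l k) m k := by
        rw [e1]
        have h3 : t * (-(w i * eHigh (w i) m i))
            ≤ t * ∑ k ∈ Finset.univ.erase i, w k * eHigh (w k) m k :=
          mul_le_mul_of_nonpos_left he2 htneg.le
        have h4 : t * (-(w i * eHigh (w i) m i)) = m.2 i := by
          rw [hhi, htdef]; field_simp
        linarith
      linarith [h i, hOpt1ge, hcalc, hhigh i]
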